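/- Let z_1^{(1)} > ... > z_{N-1}^{(1)} > 0 be the zeros of the Laguerre polynomial L_{N-1}^{(1)} and set r = (r_1,...,r_N) with r_i = √(2 z_i^{(1)}) for i < N and r_N = 0. Then for each i = 1,...,N-1: 4·Σ_{j≠i} 1/(r_i² - r_j²) = 1. -/

import Mathlib

open Finset

noncomputable def laguerre (α : ℝ) (N : ℕ) (x : ℝ) : ℝ :=
  ∑ k ∈ Finset.range (N + 1),
    ((∏ i ∈ Finset.range (N - k), (α + N - i)) / (Nat.factorial (N - k) : ℝ)) *
      ((-x) ^ k / (Nat.factorial k : ℝ))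

namespace Stmt12Aux

open Polynomial

noncomputable def lagC (M k : ℕ) : ℝ :=
  ((∏ i ∈ Finset.range (M - k), ((1:ℝ) + M - i)) / (Nat.factorial (M - k) : ℝ)) *
    ((-1) ^ k / (Nat.factorial k : ℝ))

noncomputable def lagP (M : ℕ) : Polynomial ℝ :=
  ∑ k ∈ Finset.range (M + 1), C (lagC M k) * X ^ k

lemma lagP_eval (M : ℕ) (x : ℝ) : (lagP M).eval x = laguerre 1 M x := by
  simp only [lagP, laguerre, eval_finset_sum, eval_mul, eval_C, eval_pow, eval_X]
  refine Finset.sum_congr rfl fun k _ => ?_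
  rw [lagC, neg_pow]
  ring

lemma lagP_coeff (M n : ℕ) : (lagP M).coeff n = if n ≤ M then lagC M n else 0 := by
  simp only [lagP, finset_sum_coeff, coeff_C_mul, coeff_X_pow, mul_ite, mul_one, mul_zero]
  rw [Finset.sum_ite_eq (Finset.range (M+1)) n (fun k => lagC M k)]
  simp [Nat.lt_succ_iff]

lemma lag_rec (M k : ℕ) :
    ((k:ℝ)+1)*((k:ℝ)+2) * (lagP M).coeff (k+1) + ((M:ℝ) - (k:ℝ)) * (lagP M).coeff k = 0 := by
  rcases lt_trichotomy k M with h | h | h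
  · rw [lagP_coeff, lagP_coeff, if_pos (by omega : k + 1 ≤ M), if_pos h.le]
    obtain ⟨m, hm⟩ : ∃ m, M = k + (m + 1) := ⟨M - k - 1, by omega⟩
    subst hm
    simp only [lagC]
    have h1 : k + (m+1) - (k+1) = m := by omega
    have h2 : k + (m+1) - k = m + 1 := by omega
    rw [h1, h2, Finset.prod_range_succ]
    have h3 : (1:ℝ) + (↑(k + (m+1)) : ℝ) - (m:ℝ) = (k:ℝ) + 2 := by push_cast; ring
    rw [h3, Nat.factorial_succ, Nat.factorial_succ]
    have hm' : (m.factorial:ℝ) ≠ 0 := Nat.cast_ne_zero.mpr m.factorial_ne_zero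
    have hk' : (k.factorial:ℝ) ≠ 0 := Nat.cast_ne_zero.mpr k.factorial_ne_zero
    push_cast
    field_simp
    ring
  · subst h
    rw [lagP_coeff, if_neg (by omega), lagP_coeff, if_pos le_rfl]
    ring
  · rw [lagP_coeff, if_neg (by omega), lagP_coeff, if_neg (by omega)]
    ring

lemma lag_ode (M : ℕ) :
    X * derivative (derivative (lagP M)) + (C 2 - X) * derivative (lagP M)
      + C (M:ℝ) * lagP M = 0 := by
  apply Polynomial.ext
  intro n
  cases n with
  | zero =>
    simp only [coeff_add, sub_mul, coeff_sub, mul_coeff_zero, coeff_X_zero, coeff_C_mul,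
      coeff_derivative, coeff_zero, zero_mul, coeff_C_zero]
    have h := lag_rec M 0
    push_cast at h ⊢
    linarith
  | succ n =>
    simp only [coeff_add, sub_mul, coeff_sub, coeff_X_mul, coeff_C_mul,
      coeff_derivative, coeff_zero, coeff_C_zero]
    have h := lag_rec M (n+1)
    push_cast at h ⊢
    linarith [h]

lemma derivative_finset_prod {ι : Type*} [DecidableEq ι] (s : Finset ι) (f : ι → Polynomial ℝ) :
    derivative (∏ j ∈ s, f j) = ∑ j ∈ s, (∏ k ∈ s.erase j, f k) * derivative (f j) := by
  induction s using Finset.induction_on with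
  | empty => simp
  | @insert a s ha ih =>
    rw [Finset.prod_insert ha, derivative_mul, ih, Finset.sum_insert ha,
        Finset.erase_insert ha, mul_comm (derivative (f a)) (∏ j ∈ s, f j), Finset.mul_sum]
    congr 1
    refine Finset.sum_congr rfl fun j hj => ?_
    rw [Finset.erase_insert_of_ne (by rintro rfl; exact ha hj),
        Finset.prod_insert (fun h => ha (Finset.mem_of_mem_erase h))]
    ring

variable {M : ℕ} (z : Fin M → ℝ)

lemma deriv1_eval (i : Fin M) :
    ((∏ j : Fin M, (X - C (z j))).derivative).eval (z i) =
      ∏ j ∈ Finset.univ.erase i, (z i - z j) := by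
  rw [derivative_finset_prod]
  simp only [derivative_sub, derivative_X, derivative_C, sub_zero, mul_one, eval_finset_sum,
    eval_prod, eval_sub, eval_X, eval_C]
  rw [Finset.sum_eq_single_of_mem i (Finset.mem_univ i)]
  intro j _ hji
  exact Finset.prod_eq_zero (Finset.mem_erase.mpr ⟨fun h => hji h.symm, Finset.mem_univ i⟩)
    (sub_self _)

lemma deriv2_eval (i : Fin M) :
    ((∏ j : Fin M, (X - C (z j))).derivative.derivative).eval (z i) =
      2 * ∑ j ∈ Finset.univ.erase i,
        ∏ k ∈ (Finset.univ.erase i).erase j, (z i - z k) := by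
  rw [derivative_finset_prod]
  simp only [derivative_sub, derivative_X, derivative_C, sub_zero, mul_one, derivative_sum]
  have hterm : ∀ j : Fin M, (derivative (∏ k ∈ Finset.univ.erase j, (X - C (z k)))).eval (z i)
      = ∑ l ∈ (Finset.univ.erase j : Finset (Fin M)),
          ∏ k ∈ ((Finset.univ.erase j).erase l), (z i - z k) := by
    intro j
    rw [derivative_finset_prod]
    simp [eval_finset_sum, eval_prod]
  rw [eval_finset_sum]
  simp only [hterm]
  rw [← Finset.add_sum_erase _ _ (Finset.mem_univ i), two_mul]
  congr 1
  refine Finset.sum_congr rfl fun j hj => ?_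
  have hji : j ≠ i := (Finset.mem_erase.mp hj).1
  rw [Finset.sum_eq_single_of_mem i
      (Finset.mem_erase.mpr ⟨Ne.symm hji, Finset.mem_univ i⟩)
      (fun l hl hli => Finset.prod_eq_zero (i := i)
        (Finset.mem_erase.mpr ⟨Ne.symm hli, Finset.mem_erase.mpr ⟨Ne.symm hji, Finset.mem_univ i⟩⟩)
        (sub_self (z i)))]
  rw [Finset.erase_right_comm]

end Stmt12Aux

open Stmt12Aux Polynomial in
/-- With `N = M + 1`: zeros of `L_{N-1}^{(1)}` give `r_1,…,r_{N-1}`, and `r_N = 0`. -/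
theorem stmt_12 (M : ℕ) (z : Fin M → ℝ) (hord : StrictAnti z) (hpos : ∀ i, 0 < z i)
    (hzero : ∀ i, laguerre 1 M (z i) = 0)
    (r : Fin (M + 1) → ℝ)
    (hr : r = Fin.snoc (fun i => Real.sqrt (2 * z i)) 0) :
    ∀ i : Fin M,
      4 * ∑ j ∈ Finset.univ.erase (Fin.castSucc i),
          1 / (r (Fin.castSucc i) ^ 2 - r j ^ 2) = 1 := by
  intro i
  classical
  have hzinj : Function.Injective z := hord.injective
  -- the leading coefficient
  set c : ℝ := lagC M M with hc_def
  have hc : c ≠ 0 := by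
    have : c = (-1)^M / (Nat.factorial M : ℝ) := by
      simp [hc_def, lagC]
    rw [this]
    have : (Nat.factorial M : ℝ) ≠ 0 := Nat.cast_ne_zero.mpr M.factorial_ne_zero
    positivity
  set pr : Polynomial ℝ := ∏ j : Fin M, (X - C (z j)) with hpr_def
  have hmonic : pr.Monic := monic_prod_of_monic _ _ (fun j _ => monic_X_sub_C (z j))
  have hdeg : pr.natDegree = M := by
    rw [hpr_def, natDegree_prod _ _ (fun j _ => X_sub_C_ne_zero (z j))]
    simp [natDegree_X_sub_C]
  have hPz : ∀ j, (lagP M).eval (z j) = 0 := fun j => by rw [lagP_eval]; exact hzero j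
  have hprz : ∀ j, pr.eval (z j) = 0 := by
    intro j
    rw [hpr_def, eval_prod]
    exact Finset.prod_eq_zero (Finset.mem_univ j) (by simp)
  -- factorization
  have hPQ : lagP M = C c * pr := by
    by_contra hne
    have hD : lagP M - C c * pr ≠ 0 := sub_ne_zero.mpr hne
    have hcoeff : ∀ n : ℕ, M ≤ n → (lagP M - C c * pr).coeff n = 0 := by
      intro n hn
      rw [coeff_sub, lagP_coeff, coeff_C_mul]
      rcases eq_or_lt_of_le hn with rfl | h
      · have hcM : pr.coeff M = 1 := by
          have h1 := hmonic.coeff_natDegree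
          rwa [hdeg] at h1
        rw [if_pos le_rfl, hcM, mul_one, hc_def, sub_self]
      · rw [if_neg (by omega), coeff_eq_zero_of_natDegree_lt (by omega : pr.natDegree < n),
          mul_zero, sub_zero]
    have hdlt : (lagP M - C c * pr).natDegree < M := by
      rw [Polynomial.natDegree_lt_iff_degree_lt hD]
      exact (Polynomial.degree_lt_iff_coeff_zero _ _).mpr
        (fun m hm => hcoeff m (by exact_mod_cast hm))
    exact hD (Polynomial.eq_zero_of_natDegree_lt_card_of_eval_eq_zero _ hzinj
      (fun j => by rw [eval_sub, hPz j, eval_mul, eval_C, hprz j, mul_zero, sub_zero])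
      (by simpa using hdlt))
  -- evaluate the ODE at z i
  have hode := congrArg (eval (z i)) (lag_ode M)
  rw [hPQ] at hode
  simp only [derivative_C_mul, eval_add, eval_mul, eval_sub, eval_X, eval_C, eval_zero,
    deriv1_eval z i, deriv2_eval z i, hprz i, mul_zero, add_zero] at hode
  rw [hpr_def, deriv1_eval z i, deriv2_eval z i] at hode
  set Pi0 : ℝ := ∏ j ∈ Finset.univ.erase i, (z i - z j) with hPi_def
  have hPine : Pi0 ≠ 0 := by
    rw [hPi_def]
    exact Finset.prod_ne_zero_iff.mpr
      (fun j hj => sub_ne_zero.mpr (fun h => (Finset.mem_erase.mp hj).1 (hzinj h).symm))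
  set S : ℝ := ∑ j ∈ Finset.univ.erase i, (z i - z j)⁻¹ with hS_def
  have hT : ∑ j ∈ Finset.univ.erase i, ∏ k ∈ (Finset.univ.erase i).erase j, (z i - z k)
      = Pi0 * S := by
    rw [hS_def, Finset.mul_sum]
    refine Finset.sum_congr rfl fun j hj => ?_
    have hne : z i - z j ≠ 0 :=
      sub_ne_zero.mpr (fun h => (Finset.mem_erase.mp hj).1 (hzinj h).symm)
    rw [hPi_def, ← Finset.mul_prod_erase _ _ hj, mul_comm (z i - z j), mul_assoc,
      mul_inv_cancel₀ hne, mul_one]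
  rw [hT] at hode
  have hzi : z i ≠ 0 := (hpos i).ne'
  -- key scalar identity
  have key : 2 * z i * S + (2 - z i) = 0 := by
    have h2 : (2 * z i * S + (2 - z i)) * (c * Pi0) = 0 := by ring_nf; ring_nf at hode; linarith
    rcases mul_eq_zero.mp h2 with h | h
    · exact h
    · exact absurd h (mul_ne_zero hc hPine)
  -- now compute the goal sum
  subst hr
  rw [Finset.sum_erase _ (by simp)]
  rw [Fin.sum_univ_castSucc]
  simp only [Fin.snoc_castSucc, Fin.snoc_last]
  have hsq : ∀ j : Fin M, Real.sqrt (2 * z j) ^ 2 = 2 * z j := fun j =>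
    Real.sq_sqrt (by have := hpos j; linarith)
  simp only [hsq]
  rw [← Finset.add_sum_erase _ _ (Finset.mem_univ i), sub_self, div_zero, zero_add]
  have hsum : ∑ j ∈ Finset.univ.erase i, 1 / (2 * z i - 2 * z j) = 2⁻¹ * S := by
    rw [hS_def, Finset.mul_sum]
    refine Finset.sum_congr rfl fun j hj => ?_
    rw [one_div]
    rw [show 2 * z i - 2 * z j = 2 * (z i - z j) by ring, mul_inv]
  rw [hsum]
  have h0 : (0:ℝ)^2 = 0 := by norm_num
  rw [h0, sub_zero]
  field_simp
  linear_combination 2 * key
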